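/- Let p(z) = p_N z^N + ... + p_0 be a Hurwitz stable polynomial with real coefficients of even degree N with p_N ≥ 1 and p_0 ≥ 1. Then for every real v ≥ 1, p(v) ≥ (v² + 1)^{N/2}. -/

import Mathlib

open Polynomial

private lemma amgm_one {A t : ℝ} (hA : 1 ≤ A) (ht : 0 ≤ t) :
    (A + 1) * t ^ (1 / (A + 1)) ≤ A + t := by
  have hA1 : (0:ℝ) < A + 1 := by linarith
  have h := Real.geom_mean_le_arith_mean2_weighted
    (w₁ := A / (A+1)) (w₂ := 1/(A+1)) (p₁ := 1) (p₂ := t)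
    (by positivity) (by positivity) zero_le_one ht (by field_simp)
  rw [Real.one_rpow, one_mul] at h
  have h2 := mul_le_mul_of_nonneg_left h hA1.le
  calc (A+1) * t ^ (1/(A+1)) ≤ (A+1) * (A/(A+1)*1 + 1/(A+1)*t) := h2
  _ = A + t := by field_simp

private lemma key_prod {A : ℝ} (hA : 1 ≤ A) (S : Multiset ℝ) (hS : ∀ t ∈ S, 0 ≤ t) :
    (A+1) ^ S.card * S.prod ^ (1/(A+1)) ≤ (S.map fun t => A + t).prod := by
  induction S using Multiset.induction_on with
  | empty => simp
  | cons a S ih =>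
    have ha : 0 ≤ a := hS a (Multiset.mem_cons_self a S)
    have hS' : ∀ t ∈ S, 0 ≤ t := fun t ht => hS t (Multiset.mem_cons_of_mem ht)
    have hPnn : 0 ≤ S.prod := Multiset.prod_nonneg hS'
    rw [Multiset.card_cons, Multiset.prod_cons, Multiset.map_cons, Multiset.prod_cons,
      Real.mul_rpow ha hPnn, pow_succ]
    have h1 : (A+1) * a ^ (1/(A+1)) ≤ A + a := amgm_one hA ha
    have h2 := ih hS'
    have e : (A+1)^S.card * (A+1) * (a ^ (1/(A+1)) * S.prod ^ (1/(A+1)))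
        = ((A+1) * a ^ (1/(A+1))) * ((A+1)^S.card * S.prod ^ (1/(A+1))) := by ring
    rw [e]
    have hnn1 : 0 ≤ (A+1) * a ^ (1/(A+1)) := by positivity
    have hnn2 : 0 ≤ (A+1)^S.card * S.prod ^ (1/(A+1)) := by positivity
    exact mul_le_mul h1 h2 hnn2 (le_trans hnn1 h1)

private lemma mprod_le {S : Multiset ℂ} {f g : ℂ → ℝ}
    (h : ∀ a ∈ S, 0 ≤ f a ∧ f a ≤ g a) :
    (S.map f).prod ≤ (S.map g).prod := by
  induction S using Multiset.induction_on with
  | empty => simp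
  | cons a S ih =>
    have ha := h a (Multiset.mem_cons_self a S)
    have h' : ∀ b ∈ S, 0 ≤ f b ∧ f b ≤ g b := fun b hb => h b (Multiset.mem_cons_of_mem hb)
    rw [Multiset.map_cons, Multiset.prod_cons, Multiset.map_cons, Multiset.prod_cons]
    have hfnn : 0 ≤ (S.map f).prod :=
      Multiset.prod_nonneg (by simpa using fun b hb => (h' b hb).1)
    exact mul_le_mul ha.2 (ih h') hfnn (le_trans ha.1 ha.2)

set_option maxHeartbeats 1000000 in
theorem beauzamy_inequality (N : ℕ) (hNe : Even N) (p : ℝ[X])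
    (hdeg : p.natDegree = N) (hlead : 1 ≤ p.leadingCoeff) (hconst : 1 ≤ p.coeff 0)
    (hstab : ∀ z : ℂ, (p.map (algebraMap ℝ ℂ)).IsRoot z → z.re < 0)
    (v : ℝ) (hv : 1 ≤ v) :
    (v ^ 2 + 1) ^ (N / 2) ≤ p.eval v := by
  have hp0 : p ≠ 0 := by
    intro h; rw [h] at hlead; simp at hlead; linarith
  rcases Nat.eq_zero_or_pos N with hN0 | hNpos
  · subst hN0
    have := Polynomial.eq_C_of_natDegree_eq_zero hdeg
    rw [this, eval_C]
    simpa using hconst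
  set P : ℂ[X] := p.map (algebraMap ℝ ℂ) with hPdef
  have hPne : P ≠ 0 := by
    simpa [hPdef] using (Polynomial.map_ne_zero (f := algebraMap ℝ ℂ) hp0)
  have hPdeg : P.natDegree = N := by
    rw [hPdef, Polynomial.natDegree_map, hdeg]
  have hsplits : P.Splits := IsAlgClosed.splits P
  have hcard : P.roots.card = N := by
    rw [← hPdeg]; exact (Polynomial.splits_iff_card_roots.mp hsplits)
  have hfact : P = C P.leadingCoeff * (P.roots.map fun a => X - C a).prod :=
    hsplits.eq_prod_roots
  have hlc : P.leadingCoeff = (p.leadingCoeff : ℂ) :=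
    Polynomial.leadingCoeff_map_of_injective (algebraMap ℝ ℂ).injective p
  have hre : ∀ a ∈ P.roots, a.re < 0 := fun a ha =>
    hstab a ((Polynomial.mem_roots hPne).mp ha)
  have hev : ∀ x : ℝ, P.eval (x:ℂ) = ((p.eval x : ℝ) : ℂ) := by
    intro x
    rw [hPdef, Polynomial.eval_map]
    exact Polynomial.eval₂_at_apply (algebraMap ℝ ℂ) x
  have hlcpos : (0:ℝ) < p.leadingCoeff := by linarith
  -- positivity of eval at v
  have hpos : 0 < p.eval v := by
    have hdegpos : 0 < p.degree := by
      rw [Polynomial.degree_eq_natDegree hp0, hdeg]; exact_mod_cast hNpos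
    have htend := p.tendsto_atTop_of_leadingCoeff_nonneg hdegpos hlcpos.le
    obtain ⟨x, hx1, hx2⟩ : ∃ x, v ≤ x ∧ 1 ≤ p.eval x :=
      ((Filter.eventually_ge_atTop v).and (htend.eventually_ge_atTop 1)).exists
    by_contra h
    push_neg at h
    have hIcc : (0:ℝ) ∈ Set.Icc (p.eval v) (p.eval x) := ⟨h, by linarith⟩
    obtain ⟨c, hc, hc0⟩ :=
      intermediate_value_Icc hx1 (p.continuous.continuousOn) hIcc
    have hcre : ((c:ℂ)).re < 0 := by
      apply hstab
      show (p.map (algebraMap ℝ ℂ)).eval (c:ℂ) = 0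
      rw [← hPdef, hev c, Complex.ofReal_eq_zero]
      exact hc0
    simp only [Complex.ofReal_re] at hcre
    linarith [hc.1]
  -- factored evaluation and absolute values
  have hevfact : ∀ x : ℂ, P.eval x
      = (p.leadingCoeff : ℂ) * (P.roots.map fun a => x - a).prod := by
    intro x
    conv_lhs => rw [hfact]
    rw [eval_mul, eval_C, hlc, Polynomial.eval_multiset_prod, Multiset.map_map]
    simp [Function.comp]
  have habs : ∀ x : ℂ, ‖P.eval x‖
      = p.leadingCoeff * (P.roots.map fun a => ‖x - a‖).prod := by
    intro x
    rw [hevfact x, norm_mul, show ‖(Multiset.map (fun a => x - a) P.roots).prod‖ = _ from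
      map_multiset_prod (normHom : ℂ →*₀ ℝ) _, Multiset.map_map]
    simp [Complex.norm_real, Real.norm_eq_abs, abs_of_nonneg hlcpos.le, Function.comp]
  have heval_v : p.eval v
      = p.leadingCoeff * (P.roots.map fun a => ‖(v:ℂ) - a‖).prod := by
    have h1 := habs (v:ℂ)
    rw [hev v, Complex.norm_real, Real.norm_eq_abs, abs_of_nonneg hpos.le] at h1
    exact h1
  have heval_0 : p.coeff 0
      = p.leadingCoeff * (P.roots.map fun a => ‖a‖).prod := by
    have h1 := habs 0
    rw [show ((0:ℂ)) = ((0:ℝ):ℂ) by simp, hev 0,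
      ← Polynomial.coeff_zero_eq_eval_zero, Complex.norm_real, Real.norm_eq_abs,
      abs_of_nonneg (by linarith : (0:ℝ) ≤ p.coeff 0)] at h1
    simpa [zero_sub, norm_neg] using h1
  set S : Multiset ℝ := P.roots.map Complex.normSq with hSdef
  have hScard : S.card = N := by rw [hSdef, Multiset.card_map, hcard]
  have hSnn : ∀ t ∈ S, 0 ≤ t := by
    intro t ht
    rw [hSdef] at ht
    obtain ⟨a, _, rfl⟩ := Multiset.mem_map.mp ht
    exact Complex.normSq_nonneg a
  have hSprod : S.prod = (p.coeff 0 / p.leadingCoeff)^2 := by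
    have h1 : S.prod = ((P.roots.map fun a => ‖a‖).prod)^2 := by
      rw [hSdef, ← Multiset.prod_map_pow]
      exact congrArg Multiset.prod (Multiset.map_congr rfl
        (fun a _ => (Complex.sq_norm a).symm))
    have h2 : (P.roots.map fun a => ‖a‖).prod
        = p.coeff 0 / p.leadingCoeff := by
      rw [eq_div_iff (ne_of_gt hlcpos)]
      rw [heval_0]; ring
    rw [h1, h2]
  have hv2 : (1:ℝ) ≤ v^2 := by nlinarith
  set w : ℝ := 1/(v^2+1) with hw
  have hw0 : 0 ≤ w := by positivity
  have hw1 : w ≤ 1 := by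
    rw [hw, div_le_one (by positivity)]; nlinarith
  have hsq : (v^2+1)^N ≤ (p.eval v)^2 := by
    have e1 : (p.eval v)^2 = p.leadingCoeff^2
        * (P.roots.map fun a => Complex.normSq ((v:ℂ) - a)).prod := by
      rw [heval_v, mul_pow, ← Multiset.prod_map_pow]
      exact congrArg (p.leadingCoeff ^ 2 * ·) (congrArg Multiset.prod
        (Multiset.map_congr rfl (fun a _ => Complex.sq_norm _)))
    have hperel : ∀ a ∈ P.roots, 0 ≤ v^2 + Complex.normSq a
        ∧ v^2 + Complex.normSq a ≤ Complex.normSq ((v:ℂ) - a) := by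
      intro a ha
      have h1 := hre a ha
      have h2 : Complex.normSq ((v:ℂ) - a) = (v - a.re)^2 + a.im^2 := by
        simp [Complex.normSq_apply, Complex.sub_re, Complex.sub_im]; ring
      refine ⟨add_nonneg (by positivity) (Complex.normSq_nonneg a), ?_⟩
      rw [h2, Complex.normSq_apply]
      nlinarith
    have e2 : (P.roots.map fun a => v^2 + Complex.normSq a).prod
        ≤ (P.roots.map fun a => Complex.normSq ((v:ℂ) - a)).prod := mprod_le hperel
    have e3 : (P.roots.map fun a => v^2 + Complex.normSq a)
        = S.map (fun t => v^2 + t) := by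
      rw [hSdef, Multiset.map_map]; rfl
    have e4 := key_prod hv2 S hSnn
    rw [hScard] at e4
    have hone : 1 ≤ p.leadingCoeff^2 * S.prod ^ w := by
      rw [hSprod]
      set u : ℝ := p.leadingCoeff^2 with hu
      have hu1 : (1:ℝ) ≤ u := by nlinarith
      have hupos : (0:ℝ) < u := by nlinarith
      have step1 : (u⁻¹) ^ w ≤ ((p.coeff 0 / p.leadingCoeff)^2) ^ w := by
        apply Real.rpow_le_rpow (by positivity) ?_ hw0
        have hd2 : (1:ℝ) ≤ (p.coeff 0)^2 := by nlinarith
        rw [div_pow, inv_eq_one_div, hu]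
        gcongr
      have step2 : (u⁻¹) ^ w = u ^ (-w) := by
        rw [Real.inv_rpow hupos.le, ← Real.rpow_neg hupos.le]
      calc (1:ℝ) ≤ u ^ (1 - w) := Real.one_le_rpow hu1 (by linarith)
      _ = u * u^(-w) := by
          rw [show (1 - w) = 1 + (-w) by ring, Real.rpow_add hupos, Real.rpow_one]
      _ ≤ u * ((p.coeff 0 / p.leadingCoeff)^2)^w := by
          rw [← step2]
          exact mul_le_mul_of_nonneg_left step1 hupos.le
    calc (v^2+1)^N = 1 * (v^2+1)^N := (one_mul _).symm
    _ ≤ (p.leadingCoeff^2 * S.prod ^ w) * (v^2+1)^N :=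
        mul_le_mul_of_nonneg_right hone (by positivity)
    _ = p.leadingCoeff^2 * ((v^2+1)^N * S.prod ^ w) := by ring
    _ ≤ p.leadingCoeff^2 * (S.map fun t => v^2 + t).prod :=
        mul_le_mul_of_nonneg_left e4 (by positivity)
    _ = p.leadingCoeff^2 * (P.roots.map fun a => v^2 + Complex.normSq a).prod := by
        rw [e3]
    _ ≤ p.leadingCoeff^2 * (P.roots.map fun a => Complex.normSq ((v:ℂ) - a)).prod :=
        mul_le_mul_of_nonneg_left e2 (by positivity)
    _ = (p.eval v)^2 := e1.symm
  have hhalf : ((v^2+1)^(N/2))^2 = (v^2+1)^N := by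
    rw [← pow_mul, Nat.div_mul_cancel hNe.two_dvd]
  nlinarith [hsq, hpos, hhalf, pow_nonneg (by positivity : (0:ℝ) ≤ v^2+1) (N/2)]
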